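/- Let n, k, ℓ, c be positive integers, let p ∈ [0,1], and set q = cp/ℓ; assume q ≤ 1. Let 𝒞 be any ℓ-rich collection of edge-colored k-uniform hypergraphs on vertex set [n] with colors from [c], and let 𝒞̃ be the collection of uncolored k-uniform hypergraphs obtained from members of 𝒞 by deleting the colors of their edges. Then Pr[H ~ H^k(n,p) contains some member of 𝒞̃ as a subhypergraph] ≤ Pr[H ~ H^k_c(n,q) contains some member of 𝒞 as an edge-colored subhypergraph (both edges and their colors agreeing)]. -/

import Mathlib

open MeasureTheory Filter
open scoped ENNReal

/-- The potential edges of a `k`-uniform hypergraph on vertex set `Fin n`. -/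
abbrev HEdge (n k : ℕ) := {e : Finset (Fin n) // e.card = k}

/-- A sample of the colored random hypergraph: each potential edge is either absent
(`none`) or present with a color from `Fin c`. -/
abbrev CSample (n k c : ℕ) := HEdge n k → Option (Fin c)

/-- A sample of the uncolored random hypergraph. -/
abbrev USample (n k : ℕ) := HEdge n k → Bool

/-- Every subset of the (finite) status space of an edge is measurable. -/
instance optionFinMeasurableSpace (c : ℕ) : MeasurableSpace (Option (Fin c)) := ⊤

/-- The distribution of the status of a single edge: absent with probability `1 - p`,
present with a uniformly random color with probability `p`. -/
noncomputable def edgePMF (c : ℕ) (p : ℝ≥0∞) : PMF (Option (Fin c)) :=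
  if h : c = 0 then PMF.pure none
  else
    haveI : Nonempty (Fin c) := ⟨⟨0, Nat.pos_of_ne_zero h⟩⟩
    (PMF.bernoulli (min p 1).toNNReal (by simpa using ENNReal.toNNReal_mono ENNReal.one_ne_top (min_le_right p 1))).bind fun b =>
      if b then (PMF.uniformOfFintype (Fin c)).map some else PMF.pure none

/-- The law of the randomly edge-colored random `k`-uniform hypergraph `H^k_c(n,p)`:
the edges are independent and each is present with probability `p`, receiving a
uniformly random color from `[c]`. -/
noncomputable def cHyper (n k c : ℕ) (p : ℝ≥0∞) : Measure (CSample n k c) :=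
  Measure.pi fun _ => (edgePMF c p).toMeasure

/-- The law of the uncolored binomial random `k`-uniform hypergraph `H^k(n,p)`. -/
noncomputable def uHyper (n k : ℕ) (p : ℝ≥0∞) : Measure (USample n k) :=
  Measure.pi fun _ => (PMF.bernoulli (min p 1).toNNReal (by simpa using ENNReal.toNNReal_mono ENNReal.one_ne_top (min_le_right p 1))).toMeasure

/-- The status of the pair `{v, w}` in a colored graph sample (k = 2):
`none` if absent (or if `v = w`), `some x` if present with color `x`. -/
def col {n c : ℕ} (ω : CSample n 2 c) (v w : Fin n) : Option (Fin c) :=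
  if h : v = w then none else ω ⟨{v, w}, Finset.card_pair h⟩

/-- Adjacency in an uncolored graph sample (k = 2). -/
def uadj {n : ℕ} (ω : USample n 2) (v w : Fin n) : Prop :=
  if h : v = w then False else ω ⟨{v, w}, Finset.card_pair h⟩ = true



instance optionMSC (c : ℕ) : MeasurableSingletonClass (Option (Fin c)) :=
  ⟨fun _ => MeasurableSpace.measurableSet_top⟩


-- ========== auxiliary combinatorial development ==========
section AUX
open Function Finset
set_option linter.unusedSectionVars false
set_option maxHeartbeats 800000

section Comb
variable {ι : Type*} [Fintype ι] [DecidableEq ι]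

noncomputable def wU (p : ℝ) (T : Finset ι) (H : ι → Bool) : ℝ :=
  ∏ e ∈ T, (if H e then p else 1 - p)

noncomputable def wC (c : ℕ) (q : ℝ) (T : Finset ι) (ω : ι → Option (Fin c)) : ℝ :=
  ∏ e ∈ T, (if (ω e).isSome then q / c else 1 - q)

noncomputable def FU (T : Finset ι) : Finset (ι → Bool) :=
  Finset.univ.filter (fun H => ∀ e ∉ T, H e = false)

noncomputable def FC (c : ℕ) (T : Finset ι) : Finset (ι → Option (Fin c)) :=
  Finset.univ.filter (fun ω => ∀ e ∉ T, ω e = none)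

noncomputable def SU (p : ℝ) (T : Finset ι) (A : Set (ι → Bool)) : ℝ :=
  ∑ H ∈ FU T, A.indicator (wU p T) H

noncomputable def SC (c : ℕ) (q : ℝ) (T : Finset ι) (A : Set (ι → Option (Fin c))) : ℝ :=
  ∑ ω ∈ FC c T, A.indicator (wC c q T) ω

variable {c : ℕ}

def AU (𝒞 : Set (ι → Option (Fin c))) : Set (ι → Bool) :=
  {H | ∃ C ∈ 𝒞, ∀ e, C e ≠ none → H e = true}

def AC (𝒞 : Set (ι → Option (Fin c))) : Set (ι → Option (Fin c)) :=
  {ω | ∃ C ∈ 𝒞, ∀ e, C e ≠ none → ω e = C e}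

def delF (e : ι) (𝒞 : Set (ι → Option (Fin c))) : Set (ι → Option (Fin c)) :=
  (fun C => update C e none) '' 𝒞

def zeroF (e : ι) (𝒞 : Set (ι → Option (Fin c))) : Set (ι → Option (Fin c)) :=
  {C ∈ 𝒞 | C e = none}

def colF (e : ι) (x : Fin c) (𝒞 : Set (ι → Option (Fin c))) : Set (ι → Option (Fin c)) :=
  {C ∈ 𝒞 | C e = none ∨ C e = some x}

def Rich (ℓ : ℕ) (𝒞 : Set (ι → Option (Fin c))) : Prop :=
  ∀ C ∈ 𝒞, ∀ e, C e ≠ none → ℓ ≤ {x : Fin c | Function.update C e (some x) ∈ 𝒞}.ncard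

/-- peel one coordinate off the canonical-sample sum -/
lemma sum_F {V : Type*} [Fintype V] [DecidableEq V] (v0 : V) (e : ι) {T : Finset ι}
    (he : e ∉ T) (f : (ι → V) → ℝ) :
    ∑ H ∈ (Finset.univ.filter fun H : ι → V => ∀ a ∉ insert e T, H a = v0), f H
      = ∑ v : V, ∑ H ∈ (Finset.univ.filter fun H : ι → V => ∀ a ∉ T, H a = v0),
          f (update H e v) := by
  rw [← Finset.sum_product']
  refine Finset.sum_bij' (fun H _ => ((H e, update H e v0) : V × (ι → V)))
    (fun vH _ => update vH.2 e vH.1) ?_ ?_ ?_ ?_ ?_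
  · intro H hH
    simp only [Finset.mem_filter, Finset.mem_univ, true_and] at hH
    rw [Finset.mem_product]
    refine ⟨Finset.mem_univ _, ?_⟩
    simp only [Finset.mem_filter, Finset.mem_univ, true_and]
    intro a ha
    by_cases hae : a = e
    · subst hae; simp
    · rw [update_of_ne hae]
      exact hH a (by simp [hae, ha])
  · intro vH hvH
    rw [Finset.mem_product] at hvH
    simp only [Finset.mem_filter, Finset.mem_univ, true_and] at hvH ⊢
    intro a ha
    have hae : a ≠ e := fun h => ha (h ▸ Finset.mem_insert_self e T)
    rw [update_of_ne hae]
    exact hvH a (fun h => ha (Finset.mem_insert_of_mem h))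
  · intro H hH
    simp only [update_self, update_idem, update_eq_self]
  · intro vH hvH
    rw [Finset.mem_product] at hvH
    simp only [Finset.mem_filter, Finset.mem_univ, true_and] at hvH
    have h2 : vH.2 e = v0 := hvH e he
    simp only [update_self, update_idem]
    rw [← h2, update_eq_self]
  · intro H hH
    simp [update_idem, update_eq_self]

lemma wU_insert (p : ℝ) {e : ι} {T : Finset ι} (he : e ∉ T) (H : ι → Bool) (b : Bool) :
    wU p (insert e T) (update H e b) = (if b then p else 1 - p) * wU p T H := by
  rw [wU, Finset.prod_insert he, update_self]
  congr 1
  exact Finset.prod_congr rfl fun a ha => by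
    rw [update_of_ne (fun (h : _ = e) => he (h ▸ ha))]

lemma wC_insert (q : ℝ) {e : ι} {T : Finset ι} (he : e ∉ T) (ω : ι → Option (Fin c))
    (v : Option (Fin c)) :
    wC c q (insert e T) (update ω e v) =
      (if v.isSome then q / c else 1 - q) * wC c q T ω := by
  rw [wC, Finset.prod_insert he, update_self]
  congr 1
  exact Finset.prod_congr rfl fun a ha => by
    rw [update_of_ne (fun (h : _ = e) => he (h ▸ ha))]


lemma AC_mono {𝒞 𝒟 : Set (ι → Option (Fin c))} (h : 𝒞 ⊆ 𝒟) : AC 𝒞 ⊆ AC 𝒟 :=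
  fun ω ⟨C, hC, hag⟩ => ⟨C, h hC, hag⟩

/-- Event lemmas -/
lemma AU_update_true (e : ι) (𝒞 : Set (ι → Option (Fin c))) (H : ι → Bool) :
    update H e true ∈ AU 𝒞 ↔ H ∈ AU (delF e 𝒞) := by
  constructor
  · rintro ⟨C, hC, hag⟩
    refine ⟨update C e none, ⟨C, hC, rfl⟩, fun f hf => ?_⟩
    beta_reduce at hf ⊢
    have hfe : f ≠ e := fun h => hf (by subst h; simp)
    rw [update_of_ne hfe] at hf
    have := hag f hf
    rwa [update_of_ne hfe] at this
  · rintro ⟨C', ⟨C, hC, rfl⟩, hag⟩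
    beta_reduce at hag
    refine ⟨C, hC, fun f hf => ?_⟩
    by_cases hfe : f = e
    · subst hfe; simp
    · rw [update_of_ne hfe]
      exact hag f (by rwa [update_of_ne hfe])

lemma AU_update_false (e : ι) (𝒞 : Set (ι → Option (Fin c))) (H : ι → Bool) :
    update H e false ∈ AU 𝒞 ↔ H ∈ AU (zeroF e 𝒞) := by
  constructor
  · rintro ⟨C, hC, hag⟩
    have hCe : C e = none := by
      by_contra h
      have := hag e h
      simp at this
    refine ⟨C, ⟨hC, hCe⟩, fun f hf => ?_⟩
    have hfe : f ≠ e := fun h => hf (h ▸ hCe)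
    have := hag f hf
    rwa [update_of_ne hfe] at this
  · rintro ⟨C, ⟨hC, hCe⟩, hag⟩
    refine ⟨C, hC, fun f hf => ?_⟩
    have hfe : f ≠ e := fun h => hf (h ▸ hCe)
    rw [update_of_ne hfe]
    exact hag f hf

lemma AC_update_some (e : ι) (x : Fin c) (𝒞 : Set (ι → Option (Fin c)))
    (ω : ι → Option (Fin c)) :
    update ω e (some x) ∈ AC 𝒞 ↔ ω ∈ AC (delF e (colF e x 𝒞)) := by
  constructor
  · rintro ⟨C, hC, hag⟩
    have hCe : C e = none ∨ C e = some x := by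
      by_cases h : C e = none
      · exact Or.inl h
      · right; have := hag e h; rw [update_self] at this; exact this.symm
    refine ⟨update C e none, ⟨C, ⟨hC, hCe⟩, rfl⟩, fun f hf => ?_⟩
    beta_reduce at hf ⊢
    have hfe : f ≠ e := fun h => hf (by subst h; simp)
    rw [update_of_ne hfe] at hf ⊢
    have := hag f hf
    rwa [update_of_ne hfe] at this
  · rintro ⟨C', ⟨C, ⟨hC, hCe⟩, rfl⟩, hag⟩
    beta_reduce at hag
    refine ⟨C, hC, fun f hf => ?_⟩
    by_cases hfe : f = e
    · subst hfe
      rcases hCe with h | h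
      · exact absurd h hf
      · rw [update_self, h]
    · rw [update_of_ne hfe]
      have hf' : update C e none f ≠ none := by rwa [update_of_ne hfe]
      have := hag f hf'
      rwa [update_of_ne hfe] at this

lemma AC_update_none (e : ι) (𝒞 : Set (ι → Option (Fin c)))
    (ω : ι → Option (Fin c)) :
    update ω e none ∈ AC 𝒞 ↔ ω ∈ AC (zeroF e 𝒞) := by
  constructor
  · rintro ⟨C, hC, hag⟩
    have hCe : C e = none := by
      by_contra h
      have := hag e h
      rw [update_self] at this
      exact h this.symm
    refine ⟨C, ⟨hC, hCe⟩, fun f hf => ?_⟩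
    have hfe : f ≠ e := fun h => hf (h ▸ hCe)
    have := hag f hf
    rwa [update_of_ne hfe] at this
  · rintro ⟨C, ⟨hC, hCe⟩, hag⟩
    refine ⟨C, hC, fun f hf => ?_⟩
    have hfe : f ≠ e := fun h => hf (h ▸ hCe)
    rw [update_of_ne hfe]
    exact hag f hf

/-- Richness preservation -/
lemma Rich.delF {ℓ : ℕ} {𝒞 : Set (ι → Option (Fin c))} (h : Rich ℓ 𝒞) (e : ι) :
    Rich ℓ (delF e 𝒞) := by
  rintro C' ⟨C, hC, rfl⟩ f hf
  beta_reduce at hf ⊢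
  have hfe : f ≠ e := fun hh => hf (by subst hh; simp)
  rw [update_of_ne hfe] at hf
  refine le_trans (h C hC f hf) (Set.ncard_le_ncard ?_ (Set.toFinite _))
  intro x hx
  exact ⟨update C f (some x), hx, (update_comm hfe.symm _ _ _).symm⟩

lemma Rich.zeroF {ℓ : ℕ} {𝒞 : Set (ι → Option (Fin c))} (h : Rich ℓ 𝒞) (e : ι) :
    Rich ℓ (zeroF e 𝒞) := by
  rintro C ⟨hC, hCe⟩ f hf
  have hfe : f ≠ e := fun hh => hf (hh ▸ hCe)
  refine le_trans (h C hC f hf) (Set.ncard_le_ncard ?_ (Set.toFinite _))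
  intro x hx
  exact ⟨hx, by rw [update_of_ne (Ne.symm hfe)]; exact hCe⟩

end Comb

section Main
variable {ι : Type*} [Fintype ι] [DecidableEq ι] {c : ℕ}

lemma zeroF_subset_delF_colF (e : ι) (x : Fin c) (𝒞 : Set (ι → Option (Fin c))) :
    zeroF e 𝒞 ⊆ delF e (colF e x 𝒞) := by
  rintro C ⟨hC, hCe⟩
  refine ⟨C, ⟨hC, Or.inl hCe⟩, ?_⟩
  beta_reduce
  rw [← hCe, update_eq_self]

lemma zeroF_subset_delF (e : ι) (𝒞 : Set (ι → Option (Fin c))) :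
    zeroF e 𝒞 ⊆ delF e 𝒞 := by
  rintro C ⟨hC, hCe⟩
  refine ⟨C, hC, ?_⟩
  beta_reduce
  rw [← hCe, update_eq_self]

open Classical in
lemma count_colors {ℓ : ℕ} {𝒞 : Set (ι → Option (Fin c))} (hrich : Rich ℓ 𝒞) (e : ι)
    {ω : ι → Option (Fin c)} (hA : ω ∈ AC (delF e 𝒞)) (hB : ω ∉ AC (zeroF e 𝒞)) :
    ℓ ≤ (Finset.univ.filter fun x : Fin c => ω ∈ AC (delF e (colF e x 𝒞))).card := by
  obtain ⟨C', ⟨C, hC, rfl⟩, hag⟩ := hA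
  beta_reduce at hag
  have hCe : C e ≠ none := by
    intro h
    apply hB
    refine ⟨C, ⟨hC, h⟩, fun f hf => ?_⟩
    have hfe : f ≠ e := fun hh => hf (hh ▸ h)
    have := hag f (by rwa [update_of_ne hfe])
    rwa [update_of_ne hfe] at this
  have h1 := hrich C hC e hCe
  have h2 : {x : Fin c | Function.update C e (some x) ∈ 𝒞}.ncard
      ≤ (Finset.univ.filter fun x : Fin c => ω ∈ AC (delF e (colF e x 𝒞))).card := by
    rw [Set.ncard_eq_toFinset_card', Set.toFinset_setOf]
    apply Finset.card_le_card
    intro x hx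
    rw [Finset.mem_filter] at hx ⊢
    refine ⟨Finset.mem_univ _, update C e none,
      ⟨update C e (some x), ⟨hx.2, Or.inr (update_self _ _ _)⟩, by beta_reduce; rw [update_idem]⟩,
      hag⟩
  exact le_trans h1 h2

open Classical in
lemma pointwise {ℓ : ℕ} (hℓ : 0 < ℓ) (hc : 0 < c) {p q : ℝ}
    (hp0 : 0 ≤ p) (hq1 : q ≤ 1) (hpq : (ℓ : ℝ) * q = c * p)
    {𝒞 : Set (ι → Option (Fin c))} (hrich : Rich ℓ 𝒞) (e : ι)
    (ω : ι → Option (Fin c)) {w : ℝ} (hw : 0 ≤ w) :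
    p * (if ω ∈ AC (delF e 𝒞) then w else 0)
      + (1 - p) * (if ω ∈ AC (zeroF e 𝒞) then w else 0)
      ≤ (∑ x : Fin c, (q / c) * (if ω ∈ AC (delF e (colF e x 𝒞)) then w else 0))
        + (1 - q) * (if ω ∈ AC (zeroF e 𝒞) then w else 0) := by
  have hℓr : (0:ℝ) < ℓ := by positivity
  have hcr : (0:ℝ) < c := by positivity
  have hq0 : 0 ≤ q := by nlinarith [mul_nonneg (Nat.cast_nonneg c : (0:ℝ) ≤ c) hp0]
  have hqc : 0 ≤ q / c := by positivity
  have hpeq : p = (ℓ : ℝ) * (q / c) := by field_simp; nlinarith [hpq]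
  by_cases hB : ω ∈ AC (zeroF e 𝒞)
  · have hx : ∀ x : Fin c, ω ∈ AC (delF e (colF e x 𝒞)) :=
      fun x => AC_mono (zeroF_subset_delF_colF e x 𝒞) hB
    have hA : ω ∈ AC (delF e 𝒞) := AC_mono (zeroF_subset_delF e 𝒞) hB
    simp only [if_pos hB, if_pos hA, if_pos (hx _)]
    rw [Finset.sum_const, Finset.card_univ, Fintype.card_fin, nsmul_eq_mul]
    have hcc : (c : ℝ) * (q / c * w) = q * w := by field_simp
    rw [hcc]
    nlinarith [hq0, hw]
  · simp only [if_neg hB, mul_zero, add_zero]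
    by_cases hA : ω ∈ AC (delF e 𝒞)
    · simp only [if_pos hA]
      have hcount := count_colors hrich e hA hB
      set P : Fin c → Prop := fun x => ω ∈ AC (delF e (colF e x 𝒞)) with hP
      calc p * w = ((ℓ : ℝ) * (q / c)) * w := by rw [hpeq]
        _ ≤ ((Finset.univ.filter P).card * (q / c)) * w := by
            apply mul_le_mul_of_nonneg_right _ hw
            apply mul_le_mul_of_nonneg_right _ hqc
            exact_mod_cast hcount
        _ = ∑ x ∈ Finset.univ.filter P, (q / c) * w := by
            rw [Finset.sum_const, nsmul_eq_mul]; ring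
        _ = ∑ x ∈ Finset.univ.filter P, (q / c) * (if P x then w else 0) := by
            apply Finset.sum_congr rfl
            intro x hx
            rw [Finset.mem_filter] at hx
            rw [if_pos hx.2]
        _ ≤ ∑ x : Fin c, (q / c) * (if P x then w else 0) := by
            apply Finset.sum_le_sum_of_subset_of_nonneg (Finset.filter_subset _ _)
            intro x _ _
            by_cases hh : P x <;> simp [hh, hqc, hw, mul_nonneg]
    · simp only [if_neg hA, mul_zero, zero_add, zero_mul]
      apply Finset.sum_nonneg
      intro x _
      by_cases hh : ω ∈ AC (delF e (colF e x 𝒞)) <;> simp [hh, hqc, hw, mul_nonneg]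

end Main

section Key
variable {ι : Type*} [Fintype ι] [DecidableEq ι] {c : ℕ}

lemma wU_nonneg {ι : Type*} [Fintype ι] [DecidableEq ι] {p : ℝ} (hp0 : 0 ≤ p) (hp1 : p ≤ 1)
    (T : Finset ι) (H : ι → Bool) : 0 ≤ wU p T H := by
  apply Finset.prod_nonneg
  intro e _
  by_cases h : H e <;> simp [h] <;> linarith

lemma wC_nonneg {q : ℝ} (hq0 : 0 ≤ q) (hq1 : q ≤ 1) (hc : 0 < c) (T : Finset ι)
    (ω : ι → Option (Fin c)) : 0 ≤ wC c q T ω := by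
  apply Finset.prod_nonneg
  intro e _
  have : (0:ℝ) < c := by positivity
  by_cases h : (ω e).isSome <;> simp [h] <;> [positivity; linarith]

lemma key {ℓ : ℕ} (hℓ : 0 < ℓ) (hc : 0 < c) {p q : ℝ}
    (hp0 : 0 ≤ p) (hp1 : p ≤ 1) (hq1 : q ≤ 1) (hpq : (ℓ : ℝ) * q = (c : ℝ) * p) :
    ∀ T : Finset ι, ∀ 𝒞 : Set (ι → Option (Fin c)),
      (∀ C ∈ 𝒞, ∀ e ∉ T, C e = none) → Rich ℓ 𝒞 →
      SU p T (AU 𝒞) ≤ SC c q T (AC 𝒞) := by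
  have hℓr : (0:ℝ) < ℓ := by positivity
  have hcr : (0:ℝ) < c := by positivity
  have hq0 : 0 ≤ q := by nlinarith [mul_nonneg (Nat.cast_nonneg c : (0:ℝ) ≤ c) hp0]
  intro T
  induction T using Finset.induction_on with
  | empty =>
    intro 𝒞 hsupp hrich
    have hFU : FU (∅ : Finset ι) = {fun _ => (false : Bool)} := by
      ext H
      simp [FU, funext_iff]
    have hFC : FC c (∅ : Finset ι) = {fun _ => (none : Option (Fin c))} := by
      ext ω
      simp [FC, funext_iff]
    rw [SU, SC, hFU, hFC, Finset.sum_singleton, Finset.sum_singleton]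
    have h1 : ((fun _ => false) ∈ AU 𝒞) ↔ 𝒞.Nonempty :=
      ⟨fun ⟨C, hC, _⟩ => ⟨C, hC⟩,
       fun ⟨C, hC⟩ => ⟨C, hC, fun f hf => absurd (hsupp C hC f (by simp)) hf⟩⟩
    have h2 : ((fun _ => none) ∈ AC 𝒞) ↔ 𝒞.Nonempty :=
      ⟨fun ⟨C, hC, _⟩ => ⟨C, hC⟩,
       fun ⟨C, hC⟩ => ⟨C, hC, fun f hf => absurd (hsupp C hC f (by simp)) hf⟩⟩
    have hwu : wU p (∅ : Finset ι) (fun _ => false) = 1 := Finset.prod_empty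
    have hwc : wC c q (∅ : Finset ι) (fun _ => none) = 1 := Finset.prod_empty
    by_cases hne : 𝒞.Nonempty
    · rw [Set.indicator_of_mem (h1.mpr hne), Set.indicator_of_mem (h2.mpr hne), hwu, hwc]
    · rw [Set.indicator_of_notMem (fun h => hne (h1.mp h)),
        Set.indicator_of_notMem (fun h => hne (h2.mp h))]
  | @insert e T' he IH =>
    intro 𝒞 hsupp hrich
    classical
    -- support conditions for derived families
    have hsuppD : ∀ C' ∈ delF e 𝒞, ∀ a ∉ T', C' a = none := by
      rintro C' ⟨C, hC, rfl⟩ a ha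
      beta_reduce
      by_cases hae : a = e
      · subst hae; simp
      · rw [update_of_ne hae]
        exact hsupp C hC a (by simp [hae, ha])
    have hsuppZ : ∀ C ∈ zeroF e 𝒞, ∀ a ∉ T', C a = none := by
      rintro C ⟨hC, hCe⟩ a ha
      by_cases hae : a = e
      · subst hae; exact hCe
      · exact hsupp C hC a (by simp [hae, ha])
    -- decomposition of SU
    have hSU : SU p (insert e T') (AU 𝒞)
        = p * SU p T' (AU (delF e 𝒞)) + (1 - p) * SU p T' (AU (zeroF e 𝒞)) := by
      rw [SU]
      show ∑ H ∈ (Finset.univ.filter fun H : ι → Bool => ∀ a ∉ insert e T', H a = false), _ = _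
      rw [sum_F false e he]
      rw [show (Finset.univ.filter fun H : ι → Bool => ∀ a ∉ T', H a = false) = FU T' from rfl]
      rw [Fintype.sum_bool]
      have ht : ∀ H ∈ FU T', (AU 𝒞).indicator (wU p (insert e T')) (update H e true)
          = p * (AU (delF e 𝒞)).indicator (wU p T') H := by
        intro H _
        rw [Set.indicator_apply, Set.indicator_apply, ← AU_update_true e 𝒞 H]
        split_ifs with h
        · rw [wU_insert p he H true]; simp
        · rw [mul_zero]
      have hf : ∀ H ∈ FU T', (AU 𝒞).indicator (wU p (insert e T')) (update H e false)
          = (1 - p) * (AU (zeroF e 𝒞)).indicator (wU p T') H := by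
        intro H _
        rw [Set.indicator_apply, Set.indicator_apply, ← AU_update_false e 𝒞 H]
        split_ifs with h
        · rw [wU_insert p he H false]; simp
        · rw [mul_zero]
      rw [Finset.sum_congr rfl ht, Finset.sum_congr rfl hf, ← Finset.mul_sum, ← Finset.mul_sum]
      rfl
    -- decomposition of SC
    have hSC : SC c q (insert e T') (AC 𝒞)
        = (∑ x : Fin c, (q / c) * SC c q T' (AC (delF e (colF e x 𝒞))))
          + (1 - q) * SC c q T' (AC (zeroF e 𝒞)) := by
      rw [SC]
      show ∑ ω ∈ (Finset.univ.filter fun ω : ι → Option (Fin c) => ∀ a ∉ insert e T', ω a = none),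
        _ = _
      erw [sum_F none e he]
      rw [show (Finset.univ.filter fun ω : ι → Option (Fin c) => ∀ a ∉ T', ω a = none)
        = FC c T' from rfl]
      rw [Fintype.sum_option]
      have hn : ∀ ω ∈ FC c T', (AC 𝒞).indicator (wC c q (insert e T')) (update ω e none)
          = (1 - q) * (AC (zeroF e 𝒞)).indicator (wC c q T') ω := by
        intro ω _
        rw [Set.indicator_apply, Set.indicator_apply, ← AC_update_none e 𝒞 ω]
        split_ifs with h
        · rw [wC_insert q he ω none]; simp
        · rw [mul_zero]
      have hs : ∀ x : Fin c, ∀ ω ∈ FC c T',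
          (AC 𝒞).indicator (wC c q (insert e T')) (update ω e (some x))
          = (q / c) * (AC (delF e (colF e x 𝒞))).indicator (wC c q T') ω := by
        intro x ω _
        rw [Set.indicator_apply, Set.indicator_apply, ← AC_update_some e x 𝒞 ω]
        split_ifs with h
        · rw [wC_insert q he ω (some x)]; simp
        · rw [mul_zero]
      rw [Finset.sum_congr rfl hn, ← Finset.mul_sum]
      rw [add_comm]
      congr 1
      refine Finset.sum_congr rfl fun x _ => ?_
      rw [Finset.sum_congr rfl (hs x), ← Finset.mul_sum]
      rfl
    rw [hSU, hSC]
    -- apply the induction hypothesis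
    have IH1 := IH (delF e 𝒞) hsuppD (hrich.delF e)
    have IH2 := IH (zeroF e 𝒞) hsuppZ (hrich.zeroF e)
    have step1 : p * SU p T' (AU (delF e 𝒞)) + (1 - p) * SU p T' (AU (zeroF e 𝒞))
        ≤ p * SC c q T' (AC (delF e 𝒞)) + (1 - p) * SC c q T' (AC (zeroF e 𝒞)) := by
      apply add_le_add
      · exact mul_le_mul_of_nonneg_left IH1 hp0
      · exact mul_le_mul_of_nonneg_left IH2 (by linarith)
    refine le_trans step1 ?_
    -- the pointwise richness inequality, summed over ω ∈ FC c T'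
    have lhs_eq : p * SC c q T' (AC (delF e 𝒞)) + (1 - p) * SC c q T' (AC (zeroF e 𝒞))
        = ∑ ω ∈ FC c T',
            (p * (if ω ∈ AC (delF e 𝒞) then wC c q T' ω else 0)
              + (1 - p) * (if ω ∈ AC (zeroF e 𝒞) then wC c q T' ω else 0)) := by
      rw [SC, SC, Finset.mul_sum, Finset.mul_sum, ← Finset.sum_add_distrib]
      refine Finset.sum_congr rfl fun ω _ => ?_
      rw [Set.indicator_apply, Set.indicator_apply]
    have rhs_eq : (∑ x : Fin c, (q / c) * SC c q T' (AC (delF e (colF e x 𝒞))))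
          + (1 - q) * SC c q T' (AC (zeroF e 𝒞))
        = ∑ ω ∈ FC c T',
            ((∑ x : Fin c, (q / c) * (if ω ∈ AC (delF e (colF e x 𝒞)) then wC c q T' ω else 0))
              + (1 - q) * (if ω ∈ AC (zeroF e 𝒞) then wC c q T' ω else 0)) := by
      rw [Finset.sum_add_distrib]
      congr 1
      · rw [Finset.sum_comm]
        refine Finset.sum_congr rfl fun x _ => ?_
        rw [SC, Finset.mul_sum]
        refine Finset.sum_congr rfl fun ω _ => ?_
        rw [Set.indicator_apply]
      · rw [SC, Finset.mul_sum]
        refine Finset.sum_congr rfl fun ω _ => ?_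
        rw [Set.indicator_apply]
    rw [lhs_eq, rhs_eq]
    apply Finset.sum_le_sum
    intro ω _
    exact pointwise hℓ hc hp0 hq1 hpq hrich e ω (wC_nonneg hq0 hq1 hc T' ω)

end Key

set_option linter.unusedSectionVars false
set_option maxHeartbeats 1000000

section Bridge
variable {ι : Type*} [Fintype ι] [DecidableEq ι]

lemma pi_apply_eq {V : ι → Type*} [∀ i, Fintype (V i)]
    [∀ i, MeasurableSpace (V i)] [∀ i, MeasurableSingletonClass (V i)]
    (P : ∀ i, PMF (V i)) (s : Set (∀ i, V i)) :
    Measure.pi (fun i => (P i).toMeasure) s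
      = ∑ f : (∀ i, V i), s.indicator (fun f => ∏ i, P i (f i)) f := by
  classical
  have hsing : ∀ f : ∀ i, V i, MeasurableSet ({f} : Set (∀ i, V i)) := by
    intro f
    have : ({f} : Set (∀ i, V i)) = Set.pi Set.univ (fun i => {f i}) := by
      ext g
      simp [Set.mem_pi, funext_iff, eq_comm]
    rw [this]
    exact MeasurableSet.pi Set.countable_univ (fun i _ => measurableSet_singleton _)
  have hs : s = ⋃ f ∈ Finset.univ.filter (· ∈ s), ({f} : Set (∀ i, V i)) := by
    ext g; simp
  have hdisj : (↑(Finset.univ.filter (· ∈ s)) : Set (∀ i, V i)).PairwiseDisjoint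
      (fun f => ({f} : Set (∀ i, V i))) := by
    intro a _ b _ hab
    simp [Set.disjoint_singleton, hab]
  have hmeas : Measure.pi (fun i => (P i).toMeasure) s
      = ∑ f ∈ Finset.univ.filter (· ∈ s), Measure.pi (fun i => (P i).toMeasure) ({f} : Set _) := by
    conv_lhs => rw [hs]
    exact measure_biUnion_finset hdisj (fun f _ => hsing f)
  rw [hmeas]
  have hval : ∀ f : ∀ i, V i, Measure.pi (fun i => (P i).toMeasure) {f} = ∏ i, P i (f i) := by
    intro f
    have : ({f} : Set (∀ i, V i)) = Set.pi Set.univ (fun i => {f i}) := by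
      ext g
      simp [Set.mem_pi, funext_iff, eq_comm]
    rw [this, Measure.pi_pi]
    exact Finset.prod_congr rfl fun i _ =>
      PMF.toMeasure_apply_singleton _ _ (measurableSet_singleton _)
  rw [Finset.sum_congr rfl (fun f _ => hval f)]
  rw [Finset.sum_filter]
  refine Finset.sum_congr rfl fun f _ => ?_
  rw [Set.indicator_apply]

end Bridge

section PMFvals

lemma bern_val (p : ℝ) (hp0 : 0 ≤ p) (hp1 : p ≤ 1) (b : Bool) :
    (PMF.bernoulli (min (ENNReal.ofReal p) 1).toNNReal (by simpa using ENNReal.toNNReal_mono ENNReal.one_ne_top (min_le_right (ENNReal.ofReal p) 1))) b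
      = ENNReal.ofReal (if b then p else 1 - p) := by
  have hmin : min (ENNReal.ofReal p) 1 = ENNReal.ofReal p :=
    min_eq_left (ENNReal.ofReal_le_one.mpr hp1)
  have hcoe : ((min (ENNReal.ofReal p) 1).toNNReal : ℝ≥0∞) = ENNReal.ofReal p := by
    rw [hmin, ENNReal.coe_toNNReal ENNReal.ofReal_ne_top]
  erw [PMF.bernoulli_apply]
  simp only [Bool.apply_cond ENNReal.ofNNReal, ENNReal.coe_sub, ENNReal.coe_one, hcoe]
  cases b
  · simp only [cond_false, Bool.false_eq_true, if_false]
    rw [ENNReal.ofReal_sub 1 hp0, ENNReal.ofReal_one]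
  · simp

lemma edge_val (c : ℕ) (hc : 0 < c) (q : ℝ) (hq0 : 0 ≤ q) (hq1 : q ≤ 1)
    (v : Option (Fin c)) :
    edgePMF c (ENNReal.ofReal q) v
      = ENNReal.ofReal (if v.isSome then q / c else 1 - q) := by
  have hmin : min (ENNReal.ofReal q) 1 = ENNReal.ofReal q :=
    min_eq_left (ENNReal.ofReal_le_one.mpr hq1)
  have hcoe : ((min (ENNReal.ofReal q) 1).toNNReal : ℝ≥0∞) = ENNReal.ofReal q := by
    rw [hmin, ENNReal.coe_toNNReal ENNReal.ofReal_ne_top]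
  rw [edgePMF, dif_neg hc.ne']
  haveI : Nonempty (Fin c) := ⟨⟨0, hc⟩⟩
  rw [PMF.bind_apply, tsum_bool]
  simp only [cond_false, cond_true, Bool.false_eq_true, if_true, if_false,
    PMF.bernoulli_apply, hcoe]
  erw [PMF.bernoulli_apply, PMF.bernoulli_apply]
  simp only [cond_false, cond_true, ENNReal.coe_sub, ENNReal.coe_one, hcoe]
  cases v with
  | none =>
    have h1 : ((PMF.uniformOfFintype (Fin c)).map some) none = 0 := by
      simp [PMF.map_apply]
    rw [h1, PMF.pure_apply, if_pos rfl]
    simp only [Option.isSome_none, Bool.false_eq_true, if_false]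
    rw [mul_zero, mul_one, add_zero, ENNReal.ofReal_sub 1 hq0, ENNReal.ofReal_one]
  | some x =>
    have h1 : ((PMF.uniformOfFintype (Fin c)).map some) (some x) = (c : ℝ≥0∞)⁻¹ := by
      rw [PMF.map_apply, tsum_eq_single x (by intro b hb; simp [Option.some_inj, hb.symm])]
      simp [PMF.uniformOfFintype_apply]
    have h2 : (PMF.pure (none : Option (Fin c))) (some x) = 0 := by simp
    rw [h1, h2, mul_zero, zero_add]
    simp only [Option.isSome_some, if_true]
    rw [ENNReal.ofReal_div_of_pos (by exact_mod_cast hc), ENNReal.ofReal_natCast,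
      div_eq_mul_inv]

end PMFvals

end AUX
-- ==========================================================

/-- the coupling theorem. Let `q = c·p/ℓ ≤ 1` and let `𝒞` be an
`ℓ`-rich collection of edge-colored `k`-uniform hypergraphs on `[n]` with colors in `[c]`
(each such hypergraph is encoded by the function assigning to every potential edge
either `none` (absent) or `some x` (present with color `x`)). Then the probability that
`H ~ H^k(n,p)` contains the uncolored version of some member of `𝒞` is at most the
probability that `H ~ H^k_c(n,q)` contains some member of `𝒞` with matching colors. -/
theorem coupling_rich_families (n k ℓ c : ℕ) (hn : 0 < n) (hk : 0 < k) (hℓ : 0 < ℓ)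
    (hc : 0 < c) (p : ℝ) (hp0 : 0 ≤ p) (hp1 : p ≤ 1)
    (hq1 : (c : ℝ) * p / ℓ ≤ 1)
    (𝒞 : Set (CSample n k c))
    (hrich : ∀ C ∈ 𝒞, ∀ e : HEdge n k, C e ≠ none →
      ℓ ≤ {x : Fin c | Function.update C e (some x) ∈ 𝒞}.ncard) :
    uHyper n k (ENNReal.ofReal p)
        {H | ∃ C ∈ 𝒞, ∀ e : HEdge n k, C e ≠ none → H e = true}
      ≤ cHyper n k c (ENNReal.ofReal ((c : ℝ) * p / ℓ))
        {ω | ∃ C ∈ 𝒞, ∀ e : HEdge n k, C e ≠ none → ω e = C e} := by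
  classical
  set q : ℝ := (c : ℝ) * p / ℓ with hqdef
  have hℓr : (0:ℝ) < ℓ := by positivity
  have hcr : (0:ℝ) < c := by positivity
  have hq0 : 0 ≤ q := by positivity
  have hpq : (ℓ : ℝ) * q = (c : ℝ) * p := by rw [hqdef]; field_simp
  show uHyper n k (ENNReal.ofReal p) (AU 𝒞) ≤ cHyper n k c (ENNReal.ofReal q) (AC 𝒞)
  have hU : uHyper n k (ENNReal.ofReal p) (AU 𝒞)
      = ENNReal.ofReal (SU p Finset.univ (AU 𝒞)) := by
    rw [uHyper, pi_apply_eq, SU]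
    have hFU : FU (Finset.univ : Finset (HEdge n k)) = Finset.univ := by
      ext H; simp [FU]
    rw [hFU, ENNReal.ofReal_sum_of_nonneg
      (fun H _ => Set.indicator_nonneg (fun H _ => wU_nonneg hp0 hp1 _ H) H)]
    refine Finset.sum_congr rfl fun H _ => ?_
    rw [Set.indicator_apply, Set.indicator_apply]
    split_ifs with h
    · rw [wU, ENNReal.ofReal_prod_of_nonneg (fun e _ => by
        by_cases hh : H e <;> simp [hh] <;> linarith)]
      exact Finset.prod_congr rfl fun e _ => bern_val p hp0 hp1 (H e)
    · simp
  have hC : cHyper n k c (ENNReal.ofReal q) (AC 𝒞)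
      = ENNReal.ofReal (SC c q Finset.univ (AC 𝒞)) := by
    rw [cHyper, pi_apply_eq, SC]
    have hFC : FC c (Finset.univ : Finset (HEdge n k)) = Finset.univ := by
      ext ω; simp [FC]
    rw [hFC, ENNReal.ofReal_sum_of_nonneg
      (fun ω _ => Set.indicator_nonneg (fun ω _ => wC_nonneg hq0 hq1 hc _ ω) ω)]
    refine Finset.sum_congr rfl fun ω _ => ?_
    rw [Set.indicator_apply, Set.indicator_apply]
    split_ifs with h
    · rw [wC, ENNReal.ofReal_prod_of_nonneg (fun e _ => by
        by_cases hh : (ω e).isSome <;> simp [hh] <;> [positivity; linarith])]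
      exact Finset.prod_congr rfl fun e _ => edge_val c hc q hq0 hq1 (ω e)
    · simp
  rw [hU, hC]
  exact ENNReal.ofReal_le_ofReal
    (key hℓ hc hp0 hp1 hq1 hpq Finset.univ 𝒞
      (fun C hC e he => absurd (Finset.mem_univ e) he) hrich)
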